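/- Let a(ℓ) denote the number of n-color compositions of ℓ in which no part has color 2. Then a(1) = 1, a(2) = 2, a(3) = 5, and a(n) = 3·a(n−1) − 2·a(n−2) + a(n−3) for all n ≥ 4. -/

import Mathlib

/-- The number of n-color compositions of `ℓ` in which no part has color 2:
a part `p = 1` has one allowed color, and a part `p ≥ 2` has `p - 1` allowed colors. -/
def noColor2Count (ℓ : ℕ) : ℕ :=
  ∑ c : Composition ℓ, (c.blocks.map (fun p => if p = 1 then 1 else p - 1)).prod

namespace NC2

/-- the weight of a part -/
def w (p : ℕ) : ℕ := if p = 1 then 1 else p - 1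

lemma headI_cons_tail {l : List ℕ} (h : l ≠ []) : l.headI :: l.tail = l := by
  cases l with
  | nil => exact absurd rfl h
  | cons a t => rfl

lemma blocks_ne_nil {n : ℕ} (c : Composition (n + 1)) : c.blocks ≠ [] := by
  intro h
  have := c.blocks_sum
  rw [h] at this
  simp at this

lemma headI_pos {n : ℕ} (c : Composition (n + 1)) : 0 < c.blocks.headI :=
  c.blocks_pos (by
    have := headI_cons_tail (blocks_ne_nil c)
    rw [← this]; exact List.mem_cons_self)

lemma headI_le {n : ℕ} (c : Composition (n + 1)) : c.blocks.headI ≤ n + 1 := by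
  have h := c.blocks_sum
  rw [← headI_cons_tail (blocks_ne_nil c)] at h
  simp only [List.sum_cons] at h
  omega

/-- splitting off the first block of a composition -/
def splitEquiv (n : ℕ) : Composition (n + 1) ≃ Σ p : Fin (n + 1), Composition (n - p.val) where
  toFun c :=
    ⟨⟨c.blocks.headI - 1, by have := headI_le c; have := headI_pos c; omega⟩,
     { blocks := c.blocks.tail
       blocks_pos := fun hi => c.blocks_pos (List.mem_of_mem_tail hi)
       blocks_sum := by
         show c.blocks.tail.sum = n - (c.blocks.headI - 1)
         have h := c.blocks_sum
         rw [← headI_cons_tail (blocks_ne_nil c)] at h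
         simp only [List.sum_cons] at h
         have h1 := headI_pos c
         have h2 := headI_le c
         omega }⟩
  invFun pc :=
    { blocks := (pc.1.val + 1) :: pc.2.blocks
      blocks_pos := fun hi => by
        rcases List.mem_cons.1 hi with h | h
        · omega
        · exact pc.2.blocks_pos h
      blocks_sum := by
        have hs := pc.2.blocks_sum
        have := pc.1.isLt
        simp only [List.sum_cons, hs]
        omega }
  left_inv c := by
    apply Composition.ext
    simp only
    have h1 := headI_pos c
    have : c.blocks.headI - 1 + 1 = c.blocks.headI := by omega
    rw [this, headI_cons_tail (blocks_ne_nil c)]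
  right_inv pc := by
    rcases pc with ⟨p, c⟩
    rfl

/-- the recursively defined counting sequence -/
def F : ℕ → ℕ
  | 0 => 1
  | n + 1 => ∑ p : Fin (n + 1), w (p.val + 1) * F (n - p.val)
  decreasing_by exact Nat.lt_succ_of_le (Nat.sub_le n p.val)

lemma noColor2Count_eq_F : ∀ n, noColor2Count n = F n := by
  intro n
  induction n using Nat.strong_induction_on with
  | _ n ih =>
    match n with
    | 0 =>
      have hb : ∀ c : Composition 0, c.blocks = [] := by
        intro c
        cases h : c.blocks with
        | nil => rfl
        | cons a t =>
          have hp := c.blocks_pos (h ▸ (List.mem_cons_self : a ∈ a :: t))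
          have hs := c.blocks_sum
          rw [h] at hs
          simp only [List.sum_cons] at hs
          omega
      rw [noColor2Count]
      rw [Finset.sum_congr rfl (fun c _ => by rw [hb c]; rfl : ∀ c ∈ Finset.univ,
        ((c : Composition 0).blocks.map (fun p => if p = 1 then 1 else p - 1)).prod = 1)]
      rw [Finset.sum_const, Finset.card_univ, composition_card]
      simp [F]
    | n + 1 =>
      rw [noColor2Count, Fintype.sum_equiv (splitEquiv n)
        (fun c => (c.blocks.map (fun p => if p = 1 then 1 else p - 1)).prod)
        (fun pc => w (pc.1.val + 1) * (pc.2.blocks.map (fun p => if p = 1 then 1 else p - 1)).prod)]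
      · rw [← Finset.univ_sigma_univ, Finset.sum_sigma]
        show _ = F (n+1)
        rw [F]
        apply Finset.sum_congr rfl
        intro p _
        rw [← ih (n - p.val) (Nat.lt_succ_of_le (Nat.sub_le n p.val)),
          noColor2Count, Finset.mul_sum]
      · intro c
        simp only [splitEquiv, Equiv.coe_fn_mk]
        conv_lhs => rw [← headI_cons_tail (blocks_ne_nil c)]
        have h1 := headI_pos c
        have : c.blocks.headI - 1 + 1 = c.blocks.headI := by omega
        rw [List.map_cons, List.prod_cons, this]
        rfl

/-- Sum reformulation over range, reflected. -/
lemma F_succ (n : ℕ) : F (n + 1) = ∑ k ∈ Finset.range (n + 1), w (n + 1 - k) * F k := by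
  rw [F, show (∑ p : Fin (n + 1), w (p.val + 1) * F (n - p.val))
      = ∑ k ∈ Finset.range (n + 1), w (k + 1) * F (n - k) from
    Fin.sum_univ_eq_sum_range (fun k => w (k + 1) * F (n - k)) (n + 1),
    ← Finset.sum_range_reflect (fun k => w (n + 1 - k) * F k) (n + 1)]
  apply Finset.sum_congr rfl
  intro p hp
  rw [Finset.mem_range] at hp
  have h : n + 1 - 1 - p = n - p := by omega
  have h2 : n + 1 - (n - p) = p + 1 := by omega
  rw [h, h2]

def FZ (n : ℕ) : ℤ := (F n : ℤ)

def T (m : ℕ) : ℤ := ∑ k ∈ Finset.range m, ((m - k - 1 : ℕ) : ℤ) * FZ k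

lemma FZ_succ (n : ℕ) : FZ (n + 1) = T (n + 1) + FZ n := by
  rw [FZ, F_succ, Nat.cast_sum, T]
  rw [Finset.sum_range_succ, Finset.sum_range_succ]
  have h0 : ((n + 1 - n - 1 : ℕ) : ℤ) * FZ n = 0 := by norm_num
  rw [h0, add_zero]
  have h1 : (↑(w (n + 1 - n) * F n) : ℤ) = FZ n := by
    have : n + 1 - n = 1 := by omega
    rw [this]
    simp [w, FZ]
  rw [h1]
  congr 1
  apply Finset.sum_congr rfl
  intro k hk
  have hk' := Finset.mem_range.1 hk
  have hw : w (n + 1 - k) = n + 1 - k - 1 := by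
    unfold w
    have : n + 1 - k ≠ 1 := by omega
    simp [this]
  rw [Nat.cast_mul, hw, FZ]

def U (m : ℕ) : ℤ := ∑ k ∈ Finset.range m, FZ k

lemma T_diff (m : ℕ) : T (m + 1) - T m = U m := by
  rw [T, T, U, Finset.sum_range_succ]
  have h0 : ((m + 1 - m - 1 : ℕ) : ℤ) * FZ m = 0 := by norm_num
  rw [h0, add_zero, ← Finset.sum_sub_distrib]
  apply Finset.sum_congr rfl
  intro k hk
  have hk' := Finset.mem_range.1 hk
  have h1 : ((m + 1 - k - 1 : ℕ) : ℤ) - ((m - k - 1 : ℕ) : ℤ) = 1 := by omega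
  linear_combination FZ k * h1

lemma U_diff (m : ℕ) : U (m + 1) - U m = FZ m := by
  rw [U, U, Finset.sum_range_succ]; ring

lemma T_second_diff (m : ℕ) : T (m + 2) - 2 * T (m + 1) + T m = FZ m := by
  have h1 := T_diff (m + 1)
  have h2 := T_diff m
  have h3 := U_diff m
  linarith

lemma F_rec (m : ℕ) : FZ (m + 3) = 3 * FZ (m + 2) - 2 * FZ (m + 1) + FZ m := by
  have h1 := FZ_succ (m + 2)
  have h2 := FZ_succ (m + 1)
  have h3 := FZ_succ m
  have h4 := T_second_diff (m + 1)
  linarith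

end NC2

/-- `a(1) = 1`, `a(2) = 2`, `a(3) = 5`, and `a(n) = 3a(n-1) - 2a(n-2) + a(n-3)`
for all `n ≥ 4` (stated in `ℤ` so that subtraction is honest). -/
theorem noColor2Count_recurrence :
    noColor2Count 1 = 1 ∧ noColor2Count 2 = 2 ∧ noColor2Count 3 = 5 ∧
    ∀ n : ℕ, 4 ≤ n →
      (noColor2Count n : ℤ) =
        3 * noColor2Count (n - 1) - 2 * noColor2Count (n - 2) + noColor2Count (n - 3) := by
  have hF := NC2.noColor2Count_eq_F
  have h0 : NC2.F 0 = 1 := by rw [NC2.F]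
  have h1 : NC2.F 1 = 1 := by rw [NC2.F]; simp [NC2.w, h0]
  have h2 : NC2.F 2 = 2 := by rw [NC2.F]; simp [NC2.w, h0, h1, Fin.sum_univ_succ]
  have h3 : NC2.F 3 = 5 := by rw [NC2.F]; simp [NC2.w, h0, h1, h2, Fin.sum_univ_succ]
  refine ⟨by rw [hF, h1], by rw [hF, h2], by rw [hF, h3], ?_⟩
  intro n hn
  obtain ⟨m, rfl⟩ : ∃ m, n = m + 4 := ⟨n - 4, by omega⟩
  have := NC2.F_rec (m + 1)
  simp only [NC2.FZ] at this
  have e1 : m + 4 - 1 = m + 3 := by omega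
  have e2 : m + 4 - 2 = m + 2 := by omega
  have e3 : m + 4 - 3 = m + 1 := by omega
  rw [e1, e2, e3, hF, hF, hF, hF]
  exact_mod_cast this
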